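/- The variance v_n of the number of cycles of a uniformly random permutation of {1,...,n} satisfies v_1 = 0 and v_n = 1 + (1/n) Σ_{i=1}^{n-1} v_i − H_n/n for n ≥ 2, where H_n is the n-th harmonic number. -/

import Mathlib

open scoped Classical

/-- The number of cycles of a permutation of `Fin n`, counting fixed points
as cycles of length one. -/
noncomputable def numCycles {n : ℕ} (π : Equiv.Perm (Fin n)) : ℕ :=
  π.cycleType.card + (n - π.support.card)

/-- `μ_{n,s}`: the `s`-th moment of the number of cycles of a uniformly random
permutation of `Fin n`. -/
noncomputable def cycMoment (n s : ℕ) : ℝ :=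
  (∑ π : Equiv.Perm (Fin n), ((numCycles π : ℝ)) ^ s) / (n.factorial : ℝ)

/-- `v_n`: the variance of the number of cycles of a uniformly random
permutation of `Fin n`. -/
noncomputable def cycVar (n : ℕ) : ℝ := cycMoment n 2 - (cycMoment n 1) ^ 2

open Equiv Equiv.Perm Finset

variable {α : Type*} [Fintype α] [DecidableEq α]

/-- Number of cycles (orbits) of a permutation, generic version. -/
noncomputable def myCyc (σ : Perm α) : ℕ :=
  Multiset.card σ.cycleType + (Fintype.card α - σ.support.card)

lemma support_swap_mul_of_fixed (σ : Perm α) {a b : α} (hab : a ≠ b)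
    (ha : σ a = a) (hb : σ b ≠ b) :
    (Equiv.swap a b * σ).support = insert a σ.support := by
  ext x
  simp only [Equiv.Perm.mem_support, Finset.mem_insert, Equiv.Perm.mul_apply]
  constructor
  · intro h
    by_cases hxa : x = a
    · exact Or.inl hxa
    right
    intro hσx
    rw [hσx] at h
    by_cases hxb : x = b
    · exact hb (hxb ▸ hσx)
    · exact h (Equiv.swap_apply_of_ne_of_ne hxa hxb)
  · rintro (rfl | h)
    · rw [ha, Equiv.swap_apply_left]
      exact Ne.symm hab
    · intro hc
      rcases eq_or_ne (σ x) a with h1 | h1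
      · rw [h1, Equiv.swap_apply_left] at hc
        subst hc
        exact hab (σ.injective (h1.trans ha.symm)).symm
      rcases eq_or_ne (σ x) b with h2 | h2
      · rw [h2, Equiv.swap_apply_right] at hc
        subst hc
        exact hab (ha.symm.trans h2)
      · rw [Equiv.swap_apply_of_ne_of_ne h1 h2] at hc
        exact h hc

lemma card_cycleType_swap_mul (σ : Perm α) {a b : α} (hab : a ≠ b)
    (ha : σ a = a) (hb : σ b ≠ b) :
    Multiset.card (Equiv.swap a b * σ).cycleType = Multiset.card σ.cycleType := by
  classical
  have hbs : b ∈ σ.support := mem_support.2 hb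
  have has : a ∉ σ.support := notMem_support.2 ha
  set C := σ.cycleOf b with hCdef
  have hCmem : C ∈ σ.cycleFactorsFinset := cycleOf_mem_cycleFactorsFinset_iff.2 hbs
  have hCc := mem_cycleFactorsFinset_iff.1 hCmem
  have hCcycle : C.IsCycle := hCc.1
  have hCagree : ∀ x ∈ C.support, C x = σ x := hCc.2
  have haC : a ∉ C.support := fun h => has (support_cycleOf_le σ b h)
  have hCa : C a = a := notMem_support.1 haC
  have hbC : b ∈ C.support := by
    rw [hCdef, mem_support_cycleOf_iff]
    exact ⟨SameCycle.refl _ _, hbs⟩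
  -- the list of the cycle of b
  have hnd : (σ.toList b).Nodup := nodup_toList σ b
  have hlen : 2 ≤ (σ.toList b).length :=
    two_le_length_toList_iff_mem_support.2 hbs
  have hal : a ∉ σ.toList b := by
    rw [mem_toList_iff]
    rintro ⟨⟨i, hi⟩, -⟩
    exact has (hi ▸ zpow_apply_mem_support.2 hbs)
  have hfl : (σ.toList b).formPerm = C := formPerm_toList σ b
  obtain ⟨t, hct⟩ : ∃ t, σ.toList b = b :: t := by
    have pos : 0 < (σ.cycleOf b).support.card := by
      rw [← length_toList σ b]; exact length_toList_pos_of_mem_support σ b hbs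
    obtain ⟨m, hm⟩ := Nat.exists_eq_succ_of_ne_zero pos.ne'
    refine ⟨(List.range m).map fun k => (σ ^ (k + 1)) b, ?_⟩
    simp only [Equiv.Perm.toList, hm, List.range_succ_eq_map, List.map_cons, List.map_map]
    simp [Function.comp_def, pow_succ, pow_zero]
    refine List.ext_getElem (by simp) fun i h1 h2 => ?_
    simp [List.getElem_iterate, Equiv.Perm.iterate_eq_pow]
  have hC' : Equiv.swap a b * C = (a :: σ.toList b).formPerm := by
    rw [hct, List.formPerm_cons_cons, ← hct, hfl]
  have hC'cycle : (Equiv.swap a b * C).IsCycle := by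
    rw [hC']
    refine List.isCycle_formPerm (List.nodup_cons.2 ⟨hal, hnd⟩) ?_
    simp only [List.length_cons]; omega
  have hsupC' : (Equiv.swap a b * C).support ⊆ insert a C.support := by
    intro x hx
    have hx2 := support_mul_le (Equiv.swap a b) C hx
    rw [Equiv.Perm.support_swap hab] at hx2
    rcases Finset.mem_union.1 hx2 with h | h
    · rcases Finset.mem_insert.1 h with rfl | h
      · exact Finset.mem_insert_self _ _
      · exact Finset.mem_insert_of_mem (Finset.mem_singleton.1 h ▸ hbC)
    · exact Finset.mem_insert_of_mem h
  have hmem' : Equiv.swap a b * C ∈ (Equiv.swap a b * σ).cycleFactorsFinset := by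
    rw [mem_cycleFactorsFinset_iff]
    refine ⟨hC'cycle, fun x hx => ?_⟩
    simp only [Equiv.Perm.mul_apply]
    congr 1
    rcases Finset.mem_insert.1 (hsupC' hx) with rfl | hx'
    · rw [hCa, ha]
    · exact hCagree x hx'
  -- the complementary permutation
  have hCinvb : C⁻¹ b ∈ C.support := by
    rw [← Equiv.Perm.support_inv]
    exact (Equiv.Perm.apply_mem_support).2 (by rwa [Equiv.Perm.support_inv])
  have hσ'b : (σ * C⁻¹) b = b := by
    have : σ (C⁻¹ b) = C (C⁻¹ b) := (hCagree _ hCinvb).symm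
    simp only [Equiv.Perm.mul_apply]
    rw [this, ← Equiv.Perm.mul_apply, mul_inv_cancel, Equiv.Perm.one_apply]
  have hσ'a : (σ * C⁻¹) a = a := by
    have : C⁻¹ a = a := C.injective (by rw [← Equiv.Perm.mul_apply, mul_inv_cancel, Equiv.Perm.one_apply, hCa])
    simp only [Equiv.Perm.mul_apply, this, ha]
  have hdisj : Equiv.Perm.Disjoint (Equiv.swap a b) (σ * C⁻¹) := by
    intro x
    by_cases hxa : x = a
    · right; rw [hxa]; exact hσ'a
    by_cases hxb : x = b
    · right; rw [hxb]; exact hσ'b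
    · left; exact Equiv.swap_apply_of_ne_of_ne hxa hxb
  have hcomm := hdisj.commute
  have key : Equiv.swap a b * σ * (Equiv.swap a b * C)⁻¹ = σ * C⁻¹ := by
    rw [mul_inv_rev, Equiv.swap_inv]
    calc Equiv.swap a b * σ * (C⁻¹ * Equiv.swap a b)
        = Equiv.swap a b * (σ * C⁻¹) * Equiv.swap a b := by
          rw [mul_assoc, mul_assoc, mul_assoc]
      _ = (σ * C⁻¹) * Equiv.swap a b * Equiv.swap a b := by rw [hcomm.eq]
      _ = σ * C⁻¹ := by rw [mul_assoc, Equiv.swap_mul_self, mul_one]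
  have e1 : (σ * C⁻¹).cycleType = σ.cycleType - C.cycleType :=
    cycleType_mul_inv_mem_cycleFactorsFinset_eq_sub hCmem
  have e2 : (σ * C⁻¹).cycleType
      = (Equiv.swap a b * σ).cycleType - (Equiv.swap a b * C).cycleType := by
    rw [← key]
    exact cycleType_mul_inv_mem_cycleFactorsFinset_eq_sub hmem'
  have l1 := cycleType_le_of_mem_cycleFactorsFinset hCmem
  have l2 := cycleType_le_of_mem_cycleFactorsFinset hmem'
  have c1 : Multiset.card C.cycleType = 1 := card_cycleType_eq_one.2 hCcycle
  have c2 : Multiset.card (Equiv.swap a b * C).cycleType = 1 :=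
    card_cycleType_eq_one.2 hC'cycle
  have q1 : Multiset.card σ.cycleType
      = Multiset.card (σ * C⁻¹).cycleType + Multiset.card C.cycleType := by
    rw [e1, ← Multiset.card_add, tsub_add_cancel_of_le l1]
  have q2 : Multiset.card (Equiv.swap a b * σ).cycleType
      = Multiset.card (σ * C⁻¹).cycleType + Multiset.card (Equiv.swap a b * C).cycleType := by
    rw [e2, ← Multiset.card_add, tsub_add_cancel_of_le l2]
  omega

lemma myCyc_swap_mul (σ : Perm α) {a b : α} (hab : a ≠ b) (ha : σ a = a) :
    myCyc (Equiv.swap a b * σ) + 1 = myCyc σ := by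
  have haσ : a ∉ σ.support := notMem_support.2 ha
  have hle : (Equiv.swap a b * σ).support.card ≤ Fintype.card α := Finset.card_le_univ _
  by_cases hb : σ b = b
  · have hd : Equiv.Perm.Disjoint (Equiv.swap a b) σ := by
      intro x
      by_cases hxa : x = a
      · right; rw [hxa]; exact ha
      by_cases hxb : x = b
      · right; rw [hxb]; exact hb
      · left; exact Equiv.swap_apply_of_ne_of_ne hxa hxb
    have hct : Multiset.card (Equiv.swap a b * σ).cycleType
        = Multiset.card σ.cycleType + 1 := by
      rw [hd.cycleType_mul, Multiset.card_add, (isCycle_swap hab).cycleType]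
      simp [add_comm]
    have hsup : (Equiv.swap a b * σ).support.card = σ.support.card + 2 := by
      rw [hd.support_mul, Finset.card_union_of_disjoint hd.disjoint_support,
        card_support_swap hab]
      ring
    unfold myCyc
    omega
  · have hct := card_cycleType_swap_mul σ hab ha hb
    have hsup : (Equiv.swap a b * σ).support.card = σ.support.card + 1 := by
      rw [support_swap_mul_of_fixed σ hab ha hb, Finset.card_insert_of_notMem haσ]
    unfold myCyc
    omega

/-- embedding of `Fin n` into nonzero elements of `Fin (n+1)` as an equiv. -/
def succEquiv (n : ℕ) : Fin n ≃ {x : Fin (n + 1) // x ≠ 0} where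
  toFun x := ⟨x.succ, Fin.succ_ne_zero x⟩
  invFun y := (y.1).pred y.2
  left_inv x := by simp
  right_inv y := by simp

lemma decompose_zero {n : ℕ} (e : Perm (Fin n)) :
    Equiv.Perm.decomposeFin.symm (0, e) = e.extendDomain (succEquiv n) := by
  ext x
  refine Fin.cases ?_ (fun i => ?_) x
  · rw [Equiv.Perm.decomposeFin_symm_apply_zero,
      Equiv.Perm.extendDomain_apply_not_subtype]
    simp
  · rw [Equiv.Perm.decomposeFin_symm_apply_succ]
    have h1 : (i.succ : Fin (n + 1)) = ((succEquiv n) i : Fin (n + 1)) := rfl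
    rw [h1, Equiv.Perm.extendDomain_apply_image]
    simp [succEquiv]

lemma myCyc_decompose_zero {n : ℕ} (e : Perm (Fin n)) :
    myCyc (Equiv.Perm.decomposeFin.symm (0, e)) = myCyc e + 1 := by
  have hs : e.support.card ≤ Fintype.card (Fin n) := Finset.card_le_univ _
  rw [decompose_zero]
  unfold myCyc
  rw [Equiv.Perm.cycleType_extendDomain, Equiv.Perm.card_support_extend_domain]
  simp only [Fintype.card_fin] at *
  omega

lemma numCycles_eq_myCyc {n : ℕ} (π : Perm (Fin n)) :
    (Multiset.card π.cycleType + (n - π.support.card)) = myCyc π := by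
  unfold myCyc
  rw [Fintype.card_fin]

lemma key_decompose {n : ℕ} (p : Fin (n + 1)) (e : Perm (Fin n)) :
    myCyc (Equiv.Perm.decomposeFin.symm (p, e)) = myCyc e + (if p = 0 then 1 else 0) := by
  rcases eq_or_ne p 0 with rfl | hp
  · rw [if_pos rfl, myCyc_decompose_zero]
  · rw [if_neg hp, add_zero]
    have hdec : Equiv.Perm.decomposeFin.symm (p, e)
        = Equiv.swap 0 p * Equiv.Perm.decomposeFin.symm (0, e) := by
      ext x
      refine Fin.cases ?_ (fun i => ?_) x
      · simp [Equiv.Perm.decomposeFin_symm_apply_zero, Equiv.Perm.mul_apply]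
      · simp [Equiv.Perm.decomposeFin_symm_apply_succ, Equiv.Perm.mul_apply]
    have h0 : Equiv.Perm.decomposeFin.symm (0, e) 0 = 0 :=
      Equiv.Perm.decomposeFin_symm_apply_zero 0 e
    have := myCyc_swap_mul (Equiv.Perm.decomposeFin.symm (0, e)) (Ne.symm hp) h0
    rw [myCyc_decompose_zero] at this
    rw [hdec]
    omega

lemma numCycles_myCyc {n : ℕ} (π : Perm (Fin n)) : numCycles π = myCyc π := by
  unfold numCycles myCyc
  rw [Fintype.card_fin]

lemma sum_perm_succ {n : ℕ} (f : ℕ → ℝ) :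
    ∑ π : Perm (Fin (n + 1)), f (myCyc π)
      = (∑ e : Perm (Fin n), f (myCyc e + 1)) + n * ∑ e : Perm (Fin n), f (myCyc e) := by
  rw [← Equiv.sum_comp (Equiv.Perm.decomposeFin (n := n)).symm (fun π => f (myCyc π)),
    Fintype.sum_prod_type, Fin.sum_univ_succ]
  congr 1
  · exact Finset.sum_congr rfl fun e _ => by rw [key_decompose]; simp
  · rw [Finset.sum_congr rfl fun i (_ : i ∈ univ) => Finset.sum_congr rfl
      fun e (_ : e ∈ univ) => by rw [key_decompose, if_neg (Fin.succ_ne_zero i), add_zero]]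
    rw [Finset.sum_const, Finset.card_univ, Fintype.card_fin, nsmul_eq_mul]

noncomputable def Asum (n : ℕ) : ℝ := ∑ π : Perm (Fin n), (numCycles π : ℝ)
noncomputable def Bsum (n : ℕ) : ℝ := ∑ π : Perm (Fin n), (numCycles π : ℝ) ^ 2
noncomputable def Hh (n : ℕ) : ℝ := ∑ j ∈ Finset.Icc 1 n, (1 : ℝ) / (j : ℝ)
noncomputable def Pp (n : ℕ) : ℝ := ∑ j ∈ Finset.Icc 1 n, (1 : ℝ) / ((j : ℝ)) ^ 2

lemma numCycles_fin_zero (π : Perm (Fin 0)) : numCycles π = 0 := by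
  have : π = 1 := by ext x; exact x.elim0
  subst this
  unfold numCycles
  simp

lemma Asum_succ (n : ℕ) : Asum (n + 1) = ((n : ℝ) + 1) * Asum n + n.factorial := by
  unfold Asum
  simp only [numCycles_myCyc]
  rw [sum_perm_succ (n := n) (fun k => (k : ℝ))]
  push_cast
  rw [Finset.sum_add_distrib, Finset.sum_const, Finset.card_univ, Fintype.card_perm,
    Fintype.card_fin, nsmul_eq_mul]
  ring

lemma Bsum_succ (n : ℕ) :
    Bsum (n + 1) = ((n : ℝ) + 1) * Bsum n + 2 * Asum n + n.factorial := by
  unfold Bsum Asum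
  simp only [numCycles_myCyc]
  rw [sum_perm_succ (n := n) (fun k => (k : ℝ) ^ 2)]
  push_cast
  have h1 : ∑ e : Perm (Fin n), ((myCyc e : ℝ) + 1) ^ 2
      = ∑ e : Perm (Fin n), ((myCyc e : ℝ) ^ 2 + (2 * (myCyc e : ℝ) + 1)) :=
    Finset.sum_congr rfl fun e _ => by ring
  rw [h1, Finset.sum_add_distrib, Finset.sum_add_distrib, Finset.sum_const, Finset.card_univ,
    Fintype.card_perm, Fintype.card_fin, ← Finset.mul_sum, nsmul_eq_mul]
  ring

lemma Hh_succ (n : ℕ) : Hh (n + 1) = Hh n + 1 / ((n : ℝ) + 1) := by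
  unfold Hh
  rw [Finset.sum_Icc_succ_top (by omega : 1 ≤ n + 1)]
  push_cast
  ring

lemma Pp_succ (n : ℕ) : Pp (n + 1) = Pp n + 1 / ((n : ℝ) + 1) ^ 2 := by
  unfold Pp
  rw [Finset.sum_Icc_succ_top (by omega : 1 ≤ n + 1)]
  push_cast
  ring

lemma Asum_eq (n : ℕ) : Asum n = n.factorial * Hh n := by
  induction n with
  | zero => simp [Asum, Hh, numCycles_fin_zero]
  | succ k ih =>
    have h1 : ((k : ℝ) + 1) ≠ 0 := by positivity
    rw [Asum_succ, ih, Hh_succ, Nat.factorial_succ]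
    push_cast
    field_simp

lemma Bsum_eq (n : ℕ) : Bsum n = n.factorial * (Hh n + Hh n ^ 2 - Pp n) := by
  induction n with
  | zero => simp [Bsum, Hh, Pp, numCycles_fin_zero]
  | succ k ih =>
    have h1 : ((k : ℝ) + 1) ≠ 0 := by positivity
    rw [Bsum_succ, ih, Asum_eq, Hh_succ, Pp_succ, Nat.factorial_succ]
    push_cast
    field_simp
    ring

lemma cycMoment_one (n : ℕ) : cycMoment n 1 = Hh n := by
  have hfac : ((n.factorial : ℝ)) ≠ 0 := Nat.cast_ne_zero.2 n.factorial_ne_zero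
  unfold cycMoment
  have h : (∑ π : Perm (Fin n), (numCycles π : ℝ) ^ 1) = Asum n := by
    simp [Asum]
  rw [h, Asum_eq, mul_comm, mul_div_assoc, div_self hfac, mul_one]

lemma cycMoment_two (n : ℕ) : cycMoment n 2 = Hh n + Hh n ^ 2 - Pp n := by
  have hfac : ((n.factorial : ℝ)) ≠ 0 := Nat.cast_ne_zero.2 n.factorial_ne_zero
  unfold cycMoment
  have h : (∑ π : Perm (Fin n), (numCycles π : ℝ) ^ 2) = Bsum n := rfl
  rw [h, Bsum_eq, mul_comm, mul_div_assoc, div_self hfac, mul_one]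

lemma cycVar_eq (n : ℕ) : cycVar n = Hh n - Pp n := by
  unfold cycVar
  rw [cycMoment_one, cycMoment_two]
  ring

lemma sum_Hh (m : ℕ) : ∑ i ∈ Finset.Icc 1 m, Hh i = ((m : ℝ) + 1) * Hh m - m := by
  induction m with
  | zero => simp [Hh]
  | succ k ih =>
    have h1 : ((k : ℝ) + 1) ≠ 0 := by positivity
    rw [Finset.sum_Icc_succ_top (by omega : 1 ≤ k + 1), ih, Hh_succ]
    push_cast
    field_simp
    ring

lemma sum_Pp (m : ℕ) : ∑ i ∈ Finset.Icc 1 m, Pp i = ((m : ℝ) + 1) * Pp m - Hh m := by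
  induction m with
  | zero => simp [Pp, Hh]
  | succ k ih =>
    have h1 : ((k : ℝ) + 1) ≠ 0 := by positivity
    rw [Finset.sum_Icc_succ_top (by omega : 1 ≤ k + 1), ih, Hh_succ, Pp_succ]
    push_cast
    field_simp
    ring

/-- The variance of the number of cycles satisfies `v_1 = 0` and
`v_n = 1 + (1/n) ∑_{i=1}^{n-1} v_i − H_n/n` for `n ≥ 2`. -/
theorem cycVar_recursion :
    cycVar 1 = 0 ∧
    ∀ n : ℕ, 2 ≤ n →
      cycVar n = 1 + (1 / n : ℝ) * ∑ i ∈ Finset.Icc 1 (n - 1), cycVar i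
        - (∑ j ∈ Finset.Icc 1 n, (1 : ℝ) / j) / n := by
  constructor
  · rw [cycVar_eq]
    norm_num [Hh, Pp]
  · intro n hn
    obtain ⟨m, rfl⟩ : ∃ m, n = m + 2 := ⟨n - 2, by omega⟩
    have hsum : ∑ i ∈ Finset.Icc 1 (m + 2 - 1), cycVar i
        = ∑ i ∈ Finset.Icc 1 (m + 1), (Hh i - Pp i) := by
      exact Finset.sum_congr rfl fun i _ => cycVar_eq i
    have hHdef : (∑ j ∈ Finset.Icc 1 (m + 2), (1 : ℝ) / j) = Hh (m + 2) := rfl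
    have eH : Hh (m + 2) = Hh (m + 1) + 1 / (((m + 1 : ℕ) : ℝ) + 1) := Hh_succ (m + 1)
    have eP : Pp (m + 2) = Pp (m + 1) + 1 / (((m + 1 : ℕ) : ℝ) + 1) ^ 2 := Pp_succ (m + 1)
    rw [cycVar_eq, hsum, hHdef, Finset.sum_sub_distrib, sum_Hh, sum_Pp, eH, eP, Hh_succ, Pp_succ]
    push_cast
    have h1 : ((m : ℝ) + 1) ≠ 0 := by positivity
    have h2 : ((m : ℝ) + 2) ≠ 0 := by positivity
    field_simp
    ring
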